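/- arXiv:1912.02563 — 4 statements merged into one kernel-verified Lean document; each statement's English description precedes it below -/
import Mathlib

section
/- Let (X, d, x₀) be a pointed extended pseudometric space and d_p its p-strengthening, d_p(x, x') = min(d(x, x'), ‖(d(x, x₀), d(x₀, x'))‖_p). Then W_p[d_p, x₀] = W_p[d, x₀] on D(X, x₀). -/
open scoped ENNReal BigOperators
noncomputable section

/-- An extended pseudometric. -/
structure IsEPMetric {X : Type*} (d : X → X → ℝ≥0∞) : Prop where
  refl : ∀ x, d x x = 0
  symm : ∀ x y, d x y = d y x
  triangle : ∀ x y z, d x z ≤ d x y + d y z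

/-- The ℓ^p norm of a finite tuple of extended nonnegative reals. -/
def lpNorm (p : ℝ≥0∞) {n : ℕ} (v : Fin n → ℝ≥0∞) : ℝ≥0∞ :=
  if p = ∞ then ⨆ i, v i else (∑ i, v i ^ p.toReal) ^ (1 / p.toReal)

variable {X : Type*}

/-- The congruence on the free commutative monoid (multisets) identifying
formal sums that differ by copies of the basepoint. -/
def diagCon (x₀ : X) : AddCon (Multiset X) where
  r s t := ∃ a b : ℕ, s + Multiset.replicate a x₀ = t + Multiset.replicate b x₀
  iseqv := by
    constructor
    · exact fun s => ⟨0, 0, rfl⟩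
    · rintro s t ⟨a, b, h⟩; exact ⟨b, a, h.symm⟩
    · rintro s t u ⟨a, b, h₁⟩ ⟨a', b', h₂⟩
      refine ⟨a + a', b' + b, ?_⟩
      have h3 : s + Multiset.replicate a x₀ + Multiset.replicate a' x₀
          = u + Multiset.replicate b' x₀ + Multiset.replicate b x₀ := by
        rw [h₁, add_right_comm, h₂, add_right_comm]
      simpa [Multiset.replicate_add, add_assoc] using h3
  add' := by
    rintro s t s' t' ⟨a, b, h₁⟩ ⟨a', b', h₂⟩
    refine ⟨a + a', b + b', ?_⟩
    have h3 : (s + Multiset.replicate a x₀) + (s' + Multiset.replicate a' x₀)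
        = (t + Multiset.replicate b x₀) + (t' + Multiset.replicate b' x₀) := by rw [h₁, h₂]
    calc s + s' + Multiset.replicate (a + a') x₀
        = (s + Multiset.replicate a x₀) + (s' + Multiset.replicate a' x₀) := by
          rw [Multiset.replicate_add]; exact add_add_add_comm s s' _ _
      _ = (t + Multiset.replicate b x₀) + (t' + Multiset.replicate b' x₀) := h3
      _ = t + t' + Multiset.replicate (b + b') x₀ := by
          rw [Multiset.replicate_add]; exact (add_add_add_comm t t' _ _).symm

/-- The monoid of persistence diagrams on a pointed set. -/
abbrev Diagram (X : Type*) (x₀ : X) := (diagCon x₀).Quotient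

/-- The canonical map `X → D(X,x₀)`. -/
def diagι (x₀ : X) (x : X) : Diagram X x₀ := (diagCon x₀).mk' {x}

/-- Pad a tuple to length `r` with copies of the basepoint. -/
def padTo (x₀ : X) {n : ℕ} (x : Fin n → X) (r : ℕ) : Fin r → X :=
  fun k => if h : (k : ℕ) < n then x ⟨k, h⟩ else x₀

/-- The minimal ℓ^p matching cost between two tuples of equal length. -/
def matchCost (d : X → X → ℝ≥0∞) (p : ℝ≥0∞) {r : ℕ} (x y : Fin r → X) : ℝ≥0∞ :=
  ⨅ σ : Equiv.Perm (Fin r), lpNorm p (fun k => d (x k) (y (σ k)))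

/-- A tuple enumerating a multiset. -/
def mFun (s : Multiset X) : Fin s.toList.length → X := fun k => s.toList.get k

/-- The p-Wasserstein cost between two multisets, padding both to the combined length. -/
def WpM (d : X → X → ℝ≥0∞) (x₀ : X) (p : ℝ≥0∞) (s t : Multiset X) : ℝ≥0∞ :=
  matchCost d p (padTo x₀ (mFun s) (Multiset.card s + Multiset.card t))
                (padTo x₀ (mFun t) (Multiset.card s + Multiset.card t))

/-- The p-Wasserstein distance on the monoid of persistence diagrams. -/
def Wp (d : X → X → ℝ≥0∞) (x₀ : X) (p : ℝ≥0∞) (α β : Diagram X x₀) : ℝ≥0∞ :=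
  ⨅ (s : Multiset X) (t : Multiset X) (_ : (diagCon x₀).mk' s = α)
    (_ : (diagCon x₀).mk' t = β), WpM d x₀ p s t

/-- The Lipschitz norm of a map between extended pseudometric spaces. -/
def eLipNorm {Y : Type*} (d : X → X → ℝ≥0∞) (ρ : Y → Y → ℝ≥0∞) (f : X → Y) : ℝ≥0∞ :=
  sInf {C : ℝ≥0∞ | ∀ x y, ρ (f x) (f y) ≤ C * d x y}


/-! ### Auxiliary lemmas -/

lemma lpNorm_comp_perm (p : ℝ≥0∞) {n : ℕ} (v : Fin n → ℝ≥0∞) (ρ : Equiv.Perm (Fin n)) :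
    lpNorm p (v ∘ ρ) = lpNorm p v := by
  unfold lpNorm
  split
  · exact ρ.surjective.iSup_comp v
  · congr 1
    exact Fintype.sum_equiv ρ _ _ (fun k => rfl)

lemma lpNorm_mono (p : ℝ≥0∞) {n : ℕ} {v w : Fin n → ℝ≥0∞} (h : ∀ k, v k ≤ w k) :
    lpNorm p v ≤ lpNorm p w := by
  unfold lpNorm
  split
  · exact iSup_mono h
  · exact ENNReal.rpow_le_rpow
      (Finset.sum_le_sum fun k _ => ENNReal.rpow_le_rpow (h k) ENNReal.toReal_nonneg)
      (by positivity)

lemma matchCost_mono {d d' : X → X → ℝ≥0∞} (h : ∀ x y, d x y ≤ d' x y) (p : ℝ≥0∞) {r : ℕ}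
    (x y : Fin r → X) : matchCost d p x y ≤ matchCost d' p x y :=
  iInf_mono fun σ => lpNorm_mono p fun k => h _ _

lemma matchCost_comp_perm (d : X → X → ℝ≥0∞) (p : ℝ≥0∞) {n : ℕ} (u v : Fin n → X)
    (ρ₁ ρ₂ : Equiv.Perm (Fin n)) :
    matchCost d p (u ∘ ρ₁) (v ∘ ρ₂) = matchCost d p u v := by
  have key : ∀ σ : Equiv.Perm (Fin n),
      lpNorm p (fun k => d ((u ∘ ρ₁) k) ((v ∘ ρ₂) (σ k)))
        = lpNorm p (fun k => d (u k) (v ((ρ₁.symm.trans (σ.trans ρ₂)) k))) := by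
    intro σ
    rw [← lpNorm_comp_perm p (fun k => d (u k) (v ((ρ₁.symm.trans (σ.trans ρ₂)) k))) ρ₁]
    congr 1
    funext k
    simp [Equiv.trans_apply]
  apply le_antisymm
  · refine le_iInf fun τ => ?_
    refine iInf_le_of_le (ρ₁.trans (τ.trans ρ₂.symm)) (le_of_eq ?_)
    rw [key]
    congr 1
    funext k
    simp [Equiv.trans_apply]
  · refine le_iInf fun σ => ?_
    exact iInf_le_of_le (ρ₁.symm.trans (σ.trans ρ₂)) (le_of_eq (key σ).symm)

/-- Two tuples with the same multiset of values differ by a permutation. -/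
lemma exists_comp_perm {n : ℕ} (u v : Fin n → X)
    (h : (List.ofFn u : Multiset X) = (List.ofFn v : Multiset X)) :
    ∃ ρ : Equiv.Perm (Fin n), u = v ∘ ρ := by
  induction n with
  | zero => exact ⟨1, funext fun k => k.elim0⟩
  | succ n ih =>
    have hu0 : u 0 ∈ (List.ofFn v : Multiset X) := by
      rw [← h]
      simp only [Multiset.mem_coe, List.mem_ofFn]
      exact ⟨0, rfl⟩
    obtain ⟨j, hj⟩ : ∃ j, v j = u 0 := by
      simpa only [Multiset.mem_coe, List.mem_ofFn] using hu0
    set v' : Fin (n + 1) → X := v ∘ (Equiv.swap 0 j) with hv'def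
    have hv' : (List.ofFn v' : Multiset X) = (List.ofFn v : Multiset X) :=
      Multiset.coe_eq_coe.mpr (Equiv.Perm.ofFn_comp_perm _ v)
    have hv'0 : v' 0 = u 0 := by simp [hv'def, hj]
    have h1 : (List.ofFn u : Multiset X) = (List.ofFn v' : Multiset X) := by rw [h, hv']
    rw [List.ofFn_succ, List.ofFn_succ] at h1
    rw [← Multiset.cons_coe, ← Multiset.cons_coe, hv'0] at h1
    have htail := (Multiset.cons_inj_right (u 0)).mp h1
    obtain ⟨ρ', hρ'⟩ := ih (fun i => u i.succ) (fun i => v' i.succ) htail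
    refine ⟨Equiv.Perm.decomposeFin.symm (j, ρ'), funext fun k => ?_⟩
    refine Fin.cases ?_ (fun i => ?_) k
    · simpa [Equiv.Perm.decomposeFin_symm_apply_zero] using hj.symm
    · have := congrFun hρ' i
      simpa [Equiv.Perm.decomposeFin_symm_apply_succ, hv'def] using this

lemma matchCost_congr_multiset (d : X → X → ℝ≥0∞) (p : ℝ≥0∞) {n : ℕ}
    (u u' v v' : Fin n → X)
    (hu : (List.ofFn u : Multiset X) = (List.ofFn u' : Multiset X))
    (hv : (List.ofFn v : Multiset X) = (List.ofFn v' : Multiset X)) :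
    matchCost d p u v = matchCost d p u' v' := by
  obtain ⟨ρ₁, h₁⟩ := exists_comp_perm u u' hu
  obtain ⟨ρ₂, h₂⟩ := exists_comp_perm v v' hv
  rw [h₁, h₂, matchCost_comp_perm]

lemma padTo_lt (x₀ : X) {n m : ℕ} (x : Fin n → X) (k : Fin m) (h : (k : ℕ) < n) :
    padTo x₀ x m k = x ⟨k, h⟩ := dif_pos h

lemma padTo_ge (x₀ : X) {n m : ℕ} (x : Fin n → X) (k : Fin m) (h : ¬ (k : ℕ) < n) :
    padTo x₀ x m k = x₀ := dif_neg h

lemma padTo_padTo (x₀ : X) {n r : ℕ} (x : Fin n → X) (h : n ≤ r) (m : ℕ) :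
    padTo x₀ (padTo x₀ x r) m = padTo x₀ x m := by
  funext k
  by_cases hk : (k : ℕ) < n
  · rw [padTo_lt x₀ _ k (lt_of_lt_of_le hk h), padTo_lt x₀ x k hk, padTo_lt]
  · by_cases hk' : (k : ℕ) < r
    · rw [padTo_lt x₀ _ k hk', padTo_ge x₀ x k hk, padTo_ge]
      exact hk
    · rw [padTo_ge x₀ _ k hk', padTo_ge x₀ x k hk]

lemma ofFn_padTo (x₀ : X) {n m : ℕ} (x : Fin n → X) (h : n ≤ m) :
    (List.ofFn (padTo x₀ x m) : Multiset X)
      = (List.ofFn x : Multiset X) + Multiset.replicate (m - n) x₀ := by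
  have hl : List.ofFn (padTo x₀ x m) = List.ofFn x ++ List.replicate (m - n) x₀ := by
    apply List.ext_getElem
    · simp [Nat.add_sub_cancel' h]
    · intro i h₁ h₂
      simp only [List.length_ofFn] at h₁
      rw [List.getElem_ofFn]
      by_cases hi : i < n
      · rw [List.getElem_append_left (by simpa using hi)]
        rw [List.getElem_ofFn]
        exact padTo_lt x₀ x ⟨i, h₁⟩ hi
      · rw [List.getElem_append_right (by simpa using hi)]
        rw [List.getElem_replicate]
        exact padTo_ge x₀ x ⟨i, h₁⟩ hi
  rw [hl, ← Multiset.coe_add, Multiset.coe_replicate]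

lemma matchCost_cast (d : X → X → ℝ≥0∞) (p : ℝ≥0∞) {m n : ℕ} (h : m = n)
    (u v : Fin n → X) :
    matchCost d p u v
      = matchCost d p (fun k : Fin m => u (Fin.cast h k)) (fun k : Fin m => v (Fin.cast h k)) := by
  subst h; rfl

lemma lpNorm_eq_iSup {p : ℝ≥0∞} (hpt : p = ∞) {n : ℕ} (v : Fin n → ℝ≥0∞) :
    lpNorm p v = ⨆ i, v i := by
  unfold lpNorm; rw [if_pos hpt]

lemma lpNorm_eq_rpow {p : ℝ≥0∞} (hpt : p ≠ ∞) {n : ℕ} (v : Fin n → ℝ≥0∞) :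
    lpNorm p v = (∑ i, v i ^ p.toReal) ^ (1 / p.toReal) := by
  unfold lpNorm; rw [if_neg hpt]

lemma lpNorm_le_of_pow_le {p : ℝ≥0∞} (hpt : p ≠ ∞) {n m : ℕ} {v : Fin n → ℝ≥0∞}
    {w : Fin m → ℝ≥0∞} (h : ∑ k, v k ^ p.toReal ≤ ∑ k, w k ^ p.toReal) :
    lpNorm p v ≤ lpNorm p w := by
  rw [lpNorm_eq_rpow hpt, lpNorm_eq_rpow hpt]
  exact ENNReal.rpow_le_rpow h (by positivity)

lemma toReal_pos_of_one_le {p : ℝ≥0∞} (hp : 1 ≤ p) (hpt : p ≠ ∞) : 0 < p.toReal :=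
  ENNReal.toReal_pos (by intro h0; rw [h0] at hp; simp at hp) hpt

lemma lpNorm_two_pow {p : ℝ≥0∞} (hp : 1 ≤ p) (hpt : p ≠ ∞) (a b : ℝ≥0∞) :
    lpNorm p ![a, b] ^ p.toReal = a ^ p.toReal + b ^ p.toReal := by
  have hq : 0 < p.toReal := toReal_pos_of_one_le hp hpt
  rw [lpNorm_eq_rpow hpt, ← ENNReal.rpow_mul, one_div_mul_cancel hq.ne', ENNReal.rpow_one,
    Fin.sum_univ_two]
  simp

lemma le_lpNorm (p : ℝ≥0∞) (hp : 1 ≤ p) {n : ℕ} (v : Fin n → ℝ≥0∞) (i : Fin n) :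
    v i ≤ lpNorm p v := by
  by_cases hpt : p = ∞
  · rw [lpNorm_eq_iSup hpt]; exact le_iSup v i
  · have hq : 0 < p.toReal := toReal_pos_of_one_le hp hpt
    rw [lpNorm_eq_rpow hpt]
    calc v i = (v i ^ p.toReal) ^ (1 / p.toReal) := by
          rw [← ENNReal.rpow_mul, mul_one_div_cancel hq.ne', ENNReal.rpow_one]
      _ ≤ (∑ k, v k ^ p.toReal) ^ (1 / p.toReal) :=
          ENNReal.rpow_le_rpow (Finset.single_le_sum (f := fun k => v k ^ p.toReal)
            (fun k _ => zero_le) (Finset.mem_univ i)) (by positivity)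

/-- The key construction: a matching under `d_p` can be converted into a matching
under `d` on the doubly-padded tuples, with no greater cost. -/
lemma key_lemma (d : X → X → ℝ≥0∞) (hd : IsEPMetric d) (x₀ : X) (p : ℝ≥0∞) (hp : 1 ≤ p)
    {r : ℕ} (x y : Fin r → X) (σ : Equiv.Perm (Fin r)) :
    matchCost d p (padTo x₀ x (r + r)) (padTo x₀ y (r + r))
      ≤ lpNorm p (fun k => min (d (x k) (y (σ k)))
          (lpNorm p ![d (x k) x₀, d x₀ (y (σ k))])) := by
  classical
  set P : Fin r → Prop := fun k => d (x k) (y (σ k)) ≤ lpNorm p ![d (x k) x₀, d x₀ (y (σ k))]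
    with hP
  set f : Fin r ⊕ Fin r → Fin r ⊕ Fin r := fun z =>
    Sum.elim (fun k => if P k then Sum.inl k else Sum.inr k)
      (fun k => if P k then Sum.inr k else Sum.inl k) z with hf
  have hfinv : Function.Involutive f := by
    intro z
    rcases z with k | k <;> by_cases hk : P k <;> simp [hf, hk]
  set τ' : Equiv.Perm (Fin r ⊕ Fin r) := (hfinv.toPerm).trans (Equiv.sumCongr σ σ) with hτ'
  set e := finSumFinEquiv (m := r) (n := r) with he
  set τ : Equiv.Perm (Fin (r + r)) := e.permCongr τ' with hτ
  have hτe : ∀ z, τ (e z) = e (τ' z) := by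
    intro z; simp [hτ, Equiv.permCongr_apply]
  have hpadl : ∀ i : Fin r, padTo x₀ x (r + r) (e (Sum.inl i)) = x i := by
    intro i
    have hv : ((e (Sum.inl i) : Fin (r + r)) : ℕ) < r := by simp [he]
    rw [padTo_lt x₀ x _ hv]
    congr 1
    all_goals (apply Fin.ext; simp [he])
  have hpadr : ∀ i : Fin r, padTo x₀ x (r + r) (e (Sum.inr i)) = x₀ := by
    intro i
    rw [padTo_ge]
    simp [he]
  have hpadl' : ∀ i : Fin r, padTo x₀ y (r + r) (e (Sum.inl i)) = y i := by
    intro i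
    have hv : ((e (Sum.inl i) : Fin (r + r)) : ℕ) < r := by simp [he]
    rw [padTo_lt x₀ y _ hv]
    congr 1
    all_goals (apply Fin.ext; simp [he])
  have hpadr' : ∀ i : Fin r, padTo x₀ y (r + r) (e (Sum.inr i)) = x₀ := by
    intro i
    rw [padTo_ge]
    simp [he]
  have hτ'l : ∀ k : Fin r, τ' (Sum.inl k) = if P k then Sum.inl (σ k) else Sum.inr (σ k) := by
    intro k
    by_cases hk : P k <;>
      simp [hτ', Equiv.trans_apply, Function.Involutive.coe_toPerm, hf, hk]
  have hτ'r : ∀ k : Fin r, τ' (Sum.inr k) = if P k then Sum.inr (σ k) else Sum.inl (σ k) := by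
    intro k
    by_cases hk : P k <;>
      simp [hτ', Equiv.trans_apply, Function.Involutive.coe_toPerm, hf, hk]
  have hle2 : ∀ k, ¬ P k → lpNorm p ![d (x k) x₀, d x₀ (y (σ k))] ≤ d (x k) (y (σ k)) := by
    intro k hk
    simp only [hP] at hk
    exact le_of_not_ge hk
  have hPle : ∀ k, P k → d (x k) (y (σ k)) ≤ lpNorm p ![d (x k) x₀, d x₀ (y (σ k))] := by
    intro k hk
    simp only [hP] at hk
    exact hk
  have ha : ∀ k : Fin r, d (x k) x₀ ≤ lpNorm p ![d (x k) x₀, d x₀ (y (σ k))] := by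
    intro k
    simpa using le_lpNorm p hp ![d (x k) x₀, d x₀ (y (σ k))] 0
  have hb : ∀ k : Fin r, d x₀ (y (σ k)) ≤ lpNorm p ![d (x k) x₀, d x₀ (y (σ k))] := by
    intro k
    simpa using le_lpNorm p hp ![d (x k) x₀, d x₀ (y (σ k))] 1
  refine le_trans (iInf_le _ τ) ?_
  by_cases hpt : p = ∞
  · rw [lpNorm_eq_iSup hpt, lpNorm_eq_iSup hpt]
    refine iSup_le fun k' => ?_
    obtain ⟨z, rfl⟩ := e.surjective k'
    rcases z with k | k
    · rw [hpadl k, hτe, hτ'l k]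
      by_cases hk : P k
      · rw [if_pos hk, hpadl']
        exact le_trans (le_min le_rfl (hPle k hk))
          (le_iSup (fun i => min (d (x i) (y (σ i)))
            (lpNorm p ![d (x i) x₀, d x₀ (y (σ i))])) k)
      · rw [if_neg hk, hpadr']
        exact le_trans (le_min ((ha k).trans (hle2 k hk)) (ha k))
          (le_iSup (fun i => min (d (x i) (y (σ i)))
            (lpNorm p ![d (x i) x₀, d x₀ (y (σ i))])) k)
    · rw [hpadr k, hτe, hτ'r k]
      by_cases hk : P k
      · rw [if_pos hk, hpadr', hd.refl]
        exact zero_le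
      · rw [if_neg hk, hpadl']
        exact le_trans (le_min ((hb k).trans (hle2 k hk)) (hb k))
          (le_iSup (fun i => min (d (x i) (y (σ i)))
            (lpNorm p ![d (x i) x₀, d x₀ (y (σ i))])) k)
  · have hq : 0 < p.toReal := toReal_pos_of_one_le hp hpt
    refine lpNorm_le_of_pow_le hpt ?_
    rw [← Fintype.sum_equiv e
      (fun z => d (padTo x₀ x (r + r) (e z)) (padTo x₀ y (r + r) (τ (e z))) ^ p.toReal)
      (fun k => d (padTo x₀ x (r + r) k) (padTo x₀ y (r + r) (τ k)) ^ p.toReal)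
      (fun z => rfl)]
    rw [Fintype.sum_sum_type, ← Finset.sum_add_distrib]
    refine Finset.sum_le_sum fun k _ => ?_
    by_cases hk : P k
    · simp only [hτe, hτ'l, hτ'r, if_pos hk, hpadl, hpadr, hpadl', hpadr', hd.refl x₀]
      rw [ENNReal.zero_rpow_of_pos hq, add_zero, min_eq_left (hPle k hk)]
    · simp only [hτe, hτ'l, hτ'r, if_neg hk, hpadl, hpadr, hpadl', hpadr']
      rw [min_eq_right (hle2 k hk), lpNorm_two_pow hp hpt]

/-- The p-strengthening of `d` induces the same p-Wasserstein distance: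
`W_p[d_p, x₀] = W_p[d, x₀]`. -/
theorem wasserstein_strengthening (d : X → X → ℝ≥0∞) (hd : IsEPMetric d) (x₀ : X)
    (p : ℝ≥0∞) (hp : 1 ≤ p) :
    Wp (fun x y => min (d x y) (lpNorm p ![d x x₀, d x₀ y])) x₀ p = Wp d x₀ p := by
  funext α β
  apply le_antisymm
  · refine le_iInf fun s => le_iInf fun t => le_iInf fun h1 => le_iInf fun h2 => ?_
    refine iInf_le_of_le s (iInf_le_of_le t (iInf_le_of_le h1 (iInf_le_of_le h2 ?_)))
    exact matchCost_mono (fun a b => min_le_left _ _) p _ _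
  · refine le_iInf fun s => le_iInf fun t => le_iInf fun h1 => le_iInf fun h2 => ?_
    show Wp d x₀ p α β ≤ WpM _ x₀ p s t
    set r := Multiset.card s + Multiset.card t with hr
    set s' := s + Multiset.replicate (Multiset.card t) x₀ with hs'
    set t' := t + Multiset.replicate (Multiset.card s) x₀ with ht'
    rw [WpM, matchCost]
    refine le_iInf fun σ => ?_
    have hcs' : Multiset.card s' = r := by simp [hs', hr]
    have hct' : Multiset.card t' = r := by simp [ht', hr]; omega
    have h1' : (diagCon x₀).mk' s' = α := by
      rw [← h1]
      refine ((diagCon x₀).eq).mpr ⟨0, Multiset.card t, ?_⟩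
      simp [hs']
    have h2' : (diagCon x₀).mk' t' = β := by
      rw [← h2]
      refine ((diagCon x₀).eq).mpr ⟨0, Multiset.card s, ?_⟩
      simp [ht']
    have step1 : Wp d x₀ p α β ≤ WpM d x₀ p s' t' :=
      iInf_le_of_le s' <| iInf_le_of_le t' <| iInf_le_of_le h1' <| iInf_le_of_le h2' le_rfl
    have hN : r + r = Multiset.card s' + Multiset.card t' := by rw [hcs', hct']
    have hls : s.toList.length = Multiset.card s := Multiset.length_toList s
    have hlt : t.toList.length = Multiset.card t := Multiset.length_toList t
    have hls' : s'.toList.length = Multiset.card s' := Multiset.length_toList s'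
    have hlt' : t'.toList.length = Multiset.card t' := Multiset.length_toList t'
    have hofn : ∀ u : Multiset X, (List.ofFn (mFun u) : Multiset X) = u := by
      intro u
      show ((List.ofFn u.toList.get : List X) : Multiset X) = u
      rw [List.ofFn_get, Multiset.coe_toList]
    have step2 : WpM d x₀ p s' t'
        = matchCost d p (fun k : Fin (r + r) => padTo x₀ (mFun s') _ (Fin.cast hN k))
            (fun k : Fin (r + r) => padTo x₀ (mFun t') _ (Fin.cast hN k)) :=
      matchCost_cast d p hN _ _
    have e1 : (fun k : Fin (r + r) =>
        padTo x₀ (mFun s') (Multiset.card s' + Multiset.card t') (Fin.cast hN k))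
        = padTo x₀ (mFun s') (r + r) := funext fun k => rfl
    have e2 : (fun k : Fin (r + r) =>
        padTo x₀ (mFun t') (Multiset.card s' + Multiset.card t') (Fin.cast hN k))
        = padTo x₀ (mFun t') (r + r) := funext fun k => rfl
    have hms : (List.ofFn (padTo x₀ (mFun s') (r + r)) : Multiset X)
        = (List.ofFn (padTo x₀ (mFun s) (r + r)) : Multiset X) := by
      rw [ofFn_padTo x₀ (mFun s') (by rw [hls', hcs']; omega),
        ofFn_padTo x₀ (mFun s) (by rw [hls, hr]; omega),
        hofn, hofn, hs', add_assoc, ← Multiset.replicate_add]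
      congr 2
      rw [hls, ← hs', hls', hcs', hr]
      omega
    have hmt : (List.ofFn (padTo x₀ (mFun t') (r + r)) : Multiset X)
        = (List.ofFn (padTo x₀ (mFun t) (r + r)) : Multiset X) := by
      rw [ofFn_padTo x₀ (mFun t') (by rw [hlt', hct']; omega),
        ofFn_padTo x₀ (mFun t) (by rw [hlt, hr]; omega),
        hofn, hofn, ht', add_assoc, ← Multiset.replicate_add]
      congr 2
      rw [hlt, ← ht', hlt', hct', hr]
      omega
    have step3 : matchCost d p (padTo x₀ (mFun s') (r + r)) (padTo x₀ (mFun t') (r + r))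
        = matchCost d p (padTo x₀ (mFun s) (r + r)) (padTo x₀ (mFun t) (r + r)) :=
      matchCost_congr_multiset d p _ _ _ _ hms hmt
    have hps : padTo x₀ (mFun s) (r + r)
        = padTo x₀ (padTo x₀ (mFun s) r) (r + r) :=
      (padTo_padTo x₀ (mFun s) (by rw [hls, hr]; omega) (r + r)).symm
    have hpt : padTo x₀ (mFun t) (r + r)
        = padTo x₀ (padTo x₀ (mFun t) r) (r + r) :=
      (padTo_padTo x₀ (mFun t) (by rw [hlt, hr]; omega) (r + r)).symm
    calc Wp d x₀ p α β ≤ WpM d x₀ p s' t' := step1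
      _ = matchCost d p (padTo x₀ (mFun s) (r + r)) (padTo x₀ (mFun t) (r + r)) := by
          rw [step2, e1, e2, step3]
      _ ≤ lpNorm p (fun k => min (d (padTo x₀ (mFun s) r k) (padTo x₀ (mFun t) r (σ k)))
            (lpNorm p ![d (padTo x₀ (mFun s) r k) x₀, d x₀ (padTo x₀ (mFun t) r (σ k))])) := by
          rw [hps, hpt]
          exact key_lemma d hd x₀ p hp _ _ σ

end
end

section
/- Let (X, d) be an extended pseudometric space, A ⊆ X, and p ∈ [1, ∞]. Then the function d̄_p on the quotient X/A defined by d̄_p(x, y) = min(d(x, y), ‖(d(x, A), d(y, A))‖_p), with d̄_p(x, A) = d(x, A) and d̄_p(A, A) = 0, is an extended pseudometric on X/A which satisfies the p-strengthened triangle inequality d̄_p(x, y) ≤ ‖(d̄_p(x, A), d̄_p(y, A))‖_p with respect to the collapsed basepoint A. Moreover, if d satisfies the separation axiom and A is closed, then d̄_p satisfies the separation axiom. -/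
open scoped ENNReal BigOperators
noncomputable section

variable {X : Type*}

namespace QMaux

variable {p : ℝ≥0∞}

lemma pair_inf (u v : ℝ≥0∞) : lpNorm ∞ ![u, v] = max u v := by
  simp only [lpNorm, if_pos rfl]
  apply le_antisymm
  · exact iSup_le fun i => by fin_cases i <;> simp
  · exact max_le (le_iSup (![u, v]) 0) (le_iSup (![u, v]) 1)

lemma pair_fin (hp : p ≠ ∞) (u v : ℝ≥0∞) :
    lpNorm p ![u, v] = (u ^ p.toReal + v ^ p.toReal) ^ (1 / p.toReal) := by
  simp [lpNorm, if_neg hp, Fin.sum_univ_two]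

variable (hp : 1 ≤ p)
include hp

lemma toReal_one_le (hne : p ≠ ∞) : 1 ≤ p.toReal := by
  simpa using ENNReal.toReal_mono hne hp

lemma toReal_pos (hne : p ≠ ∞) : 0 < p.toReal := lt_of_lt_of_le one_pos (toReal_one_le hp hne)

lemma N_symm (u v : ℝ≥0∞) : lpNorm p ![u, v] = lpNorm p ![v, u] := by
  rcases eq_or_ne p ∞ with rfl | hne
  · rw [pair_inf, pair_inf, max_comm]
  · rw [pair_fin hne, pair_fin hne, add_comm]

lemma le_N_left (u v : ℝ≥0∞) : u ≤ lpNorm p ![u, v] := by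
  rcases eq_or_ne p ∞ with rfl | hne
  · rw [pair_inf]; exact le_max_left _ _
  · rw [pair_fin hne]
    calc u = (u ^ p.toReal) ^ (1 / p.toReal) := by
            rw [one_div, ENNReal.rpow_rpow_inv (toReal_pos hp hne).ne']
      _ ≤ _ := ENNReal.rpow_le_rpow le_self_add (by positivity)

lemma le_N_right (u v : ℝ≥0∞) : v ≤ lpNorm p ![u, v] := by
  rw [N_symm hp]; exact le_N_left hp v u

lemma N_le_add (u v : ℝ≥0∞) : lpNorm p ![u, v] ≤ u + v := by
  rcases eq_or_ne p ∞ with rfl | hne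
  · rw [pair_inf]; exact max_le le_self_add le_add_self
  · rw [pair_fin hne]
    exact ENNReal.rpow_add_rpow_le_add u v (toReal_one_le hp hne)

lemma N_mono {u u' v v' : ℝ≥0∞} (hu : u ≤ u') (hv : v ≤ v') :
    lpNorm p ![u, v] ≤ lpNorm p ![u', v'] := by
  rcases eq_or_ne p ∞ with rfl | hne
  · rw [pair_inf, pair_inf]; exact max_le_max hu hv
  · rw [pair_fin hne, pair_fin hne]
    have h0 : (0:ℝ) ≤ p.toReal := (toReal_pos hp hne).le
    exact ENNReal.rpow_le_rpow
      (add_le_add (ENNReal.rpow_le_rpow hu h0) (ENNReal.rpow_le_rpow hv h0)) (by positivity)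

lemma N_zero_left (v : ℝ≥0∞) : lpNorm p ![0, v] = v := by
  rcases eq_or_ne p ∞ with rfl | hne
  · rw [pair_inf]; simp
  · rw [pair_fin hne, ENNReal.zero_rpow_of_pos (toReal_pos hp hne), zero_add, one_div,
      ENNReal.rpow_rpow_inv (toReal_pos hp hne).ne']

lemma N_add_left (a b c : ℝ≥0∞) : lpNorm p ![a + b, c] ≤ a + lpNorm p ![b, c] := by
  rcases eq_or_ne p ∞ with rfl | hne
  · rw [pair_inf, pair_inf]
    exact max_le (add_le_add le_rfl (le_max_left _ _))
      (le_add_left (le_max_right _ _))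
  · rw [pair_fin hne, pair_fin hne]
    have key := ENNReal.Lp_add_le (Finset.univ : Finset (Fin 2))
      (![a, 0]) (![b, c]) (toReal_one_le hp hne)
    simp only [Fin.sum_univ_two, Matrix.cons_val_zero, Matrix.cons_val_one, Matrix.head_cons,
      add_zero] at key
    calc ((a + b) ^ p.toReal + c ^ p.toReal) ^ (1 / p.toReal)
        ≤ (a ^ p.toReal + 0 ^ p.toReal) ^ (1 / p.toReal)
          + (b ^ p.toReal + c ^ p.toReal) ^ (1 / p.toReal) := by
            simpa using key
      _ = a + (b ^ p.toReal + c ^ p.toReal) ^ (1 / p.toReal) := by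
            rw [ENNReal.zero_rpow_of_pos (toReal_pos hp hne), add_zero, one_div,
              ENNReal.rpow_rpow_inv (toReal_pos hp hne).ne']

lemma N_add_right (a b c : ℝ≥0∞) : lpNorm p ![b, c + a] ≤ lpNorm p ![b, c] + a := by
  calc lpNorm p ![b, c + a] = lpNorm p ![a + c, b] := by rw [N_symm hp, add_comm]
    _ ≤ a + lpNorm p ![c, b] := N_add_left hp a c b
    _ = lpNorm p ![b, c] + a := by rw [add_comm, N_symm hp]

end QMaux

/-- The quotient metric `d̄_p` obtained by collapsing `A ⊆ X` to a point is an extended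
pseudometric which collapses `A`, satisfies the p-strengthened triangle inequality with
respect to the collapsed basepoint, behaves as the distance to `A` against points of `A`,
and satisfies separation on the quotient whenever `d` is separated and `A` is closed. -/
theorem quotient_metric_props (d : X → X → ℝ≥0∞) (hd : IsEPMetric d) (A : Set X)
    (p : ℝ≥0∞) (hp : 1 ≤ p) :
    IsEPMetric (fun x y => min (d x y) (lpNorm p ![⨅ a ∈ A, d x a, ⨅ a ∈ A, d y a])) ∧
    (∀ x y : X, min (d x y) (lpNorm p ![⨅ a ∈ A, d x a, ⨅ a ∈ A, d y a])
        ≤ lpNorm p ![⨅ a ∈ A, d x a, ⨅ a ∈ A, d y a]) ∧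
    (∀ x ∈ A, ∀ y : X, min (d x y) (lpNorm p ![⨅ a ∈ A, d x a, ⨅ a ∈ A, d y a])
        = ⨅ a ∈ A, d y a) ∧
    ((∀ x y : X, d x y = 0 → x = y) → (∀ x : X, (⨅ a ∈ A, d x a) = 0 → x ∈ A) →
      ∀ x y : X, min (d x y) (lpNorm p ![⨅ a ∈ A, d x a, ⨅ a ∈ A, d y a]) = 0 →
        x = y ∨ (x ∈ A ∧ y ∈ A)) := by
  have hDle : ∀ x y : X, (⨅ a ∈ A, d x a) ≤ d x y + ⨅ a ∈ A, d y a := by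
    intro x y
    calc (⨅ a ∈ A, d x a) ≤ ⨅ a ∈ A, (d x y + d y a) :=
          le_iInf₂ fun a ha => (iInf₂_le a ha).trans (hd.triangle x y a)
      _ = d x y + ⨅ a ∈ A, d y a := by simp_rw [← ENNReal.add_iInf]
  have hDzero : ∀ x ∈ A, (⨅ a ∈ A, d x a) = 0 := fun x hx =>
    le_antisymm ((iInf₂_le x hx).trans_eq (hd.refl x)) zero_le
  refine ⟨⟨fun x => ?_, fun x y => ?_, fun x y z => ?_⟩, fun x y => min_le_right _ _,
    fun x hx y => ?_, fun hsep hA x y h => ?_⟩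
  · simp [hd.refl x]
  · rw [hd.symm x y, QMaux.N_symm hp]
  · set Dx : ℝ≥0∞ := ⨅ a ∈ A, d x a with hDx
    set Dy : ℝ≥0∞ := ⨅ a ∈ A, d y a with hDy
    set Dz : ℝ≥0∞ := ⨅ a ∈ A, d z a with hDz
    rcases min_cases (d x y) (lpNorm p ![Dx, Dy]) with ⟨h1, _⟩ | ⟨h1, _⟩ <;>
      rcases min_cases (d y z) (lpNorm p ![Dy, Dz]) with ⟨h2, _⟩ | ⟨h2, _⟩ <;>
      rw [h1, h2]
    · exact (min_le_left _ _).trans (hd.triangle x y z)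
    · calc min (d x z) (lpNorm p ![Dx, Dz]) ≤ lpNorm p ![Dx, Dz] := min_le_right _ _
        _ ≤ lpNorm p ![d x y + Dy, Dz] := QMaux.N_mono hp (hDle x y) le_rfl
        _ ≤ d x y + lpNorm p ![Dy, Dz] := QMaux.N_add_left hp _ _ _
    · have hz : Dz ≤ Dy + d y z := by
        rw [add_comm, ← hd.symm z y]; exact hDle z y
      calc min (d x z) (lpNorm p ![Dx, Dz]) ≤ lpNorm p ![Dx, Dz] := min_le_right _ _
        _ ≤ lpNorm p ![Dx, Dy + d y z] := QMaux.N_mono hp le_rfl hz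
        _ ≤ lpNorm p ![Dx, Dy] + d y z := QMaux.N_add_right hp _ _ _
    · calc min (d x z) (lpNorm p ![Dx, Dz]) ≤ lpNorm p ![Dx, Dz] := min_le_right _ _
        _ ≤ Dx + Dz := QMaux.N_le_add hp _ _
        _ ≤ lpNorm p ![Dx, Dy] + lpNorm p ![Dy, Dz] :=
            add_le_add (QMaux.le_N_left hp _ _) (QMaux.le_N_right hp _ _)
  · rw [hDzero x hx, QMaux.N_zero_left hp]
    exact min_eq_right ((iInf₂_le x hx).trans_eq (hd.symm y x))
  · rcases min_eq_iff.mp h with ⟨h1, _⟩ | ⟨h1, _⟩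
    · exact Or.inl (hsep x y h1)
    · refine Or.inr ⟨hA x ?_, hA y ?_⟩
      · exact le_antisymm (h1 ▸ QMaux.le_N_left hp _ _) zero_le
      · exact le_antisymm (h1 ▸ QMaux.le_N_right hp _ _) zero_le

end
end

section
/- Kantorovich-Rubinstein inequality for persistence diagrams: let (X, d, x₀) be a pointed extended pseudometric space and α = a₁+⋯+a_n, β = b₁+⋯+b_m in D(X, x₀). Then for every 1-Lipschitz function k : X → ℝ with k(x₀) = 0, one has Σᵢ k(aᵢ) − Σⱼ k(bⱼ) ≤ W₁[d, x₀](α, β). -/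
open scoped ENNReal BigOperators
noncomputable section

variable {X : Type*}

private lemma ofReal_sum_le' {n : ℕ} (f : Fin n → ℝ) :
    ENNReal.ofReal (∑ i, f i) ≤ ∑ i, ENNReal.ofReal (f i) := by
  induction n with
  | zero => simp
  | succ n ih =>
    rw [Fin.sum_univ_succ, Fin.sum_univ_succ]
    exact (ENNReal.ofReal_add_le).trans (add_le_add le_rfl (ih _))

private lemma sum_map_eq_of_rel (x₀ : X) (k : X → ℝ) (hk₀ : k x₀ = 0) {s s' : Multiset X}
    (h : (diagCon x₀).mk' s' = (diagCon x₀).mk' s) :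
    (s'.map k).sum = (s.map k).sum := by
  obtain ⟨a, b, hab⟩ := (AddCon.eq _).mp h
  have := congrArg (fun m => (Multiset.map k m).sum) hab
  simpa [Multiset.map_replicate, hk₀, Multiset.sum_replicate] using this

private lemma sum_fin_map (k : X → ℝ) (l : List X) :
    ∑ i : Fin l.length, k (l.get i) = (l.map k).sum := by
  have h1 : (List.ofFn (fun i : Fin l.length => k (l.get i))).sum
      = ∑ i : Fin l.length, k (l.get i) := List.sum_ofFn
  rw [← h1]
  have : List.ofFn (fun i : Fin l.length => k (l.get i)) = l.map k := by
    have := List.map_ofFn (f := l.get) (g := k)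
    rw [List.ofFn_get] at this
    exact this.symm ▸ rfl
  rw [this]

private lemma sum_padTo (x₀ : X) (k : X → ℝ) (hk₀ : k x₀ = 0) (s : Multiset X) (r : ℕ)
    (hr : Multiset.card s ≤ r) :
    ∑ i : Fin r, k (padTo x₀ (mFun s) r i) = (s.map k).sum := by
  set l := s.toList with hl
  have hlen : l.length = Multiset.card s := Multiset.length_toList s
  set F : ℕ → ℝ := fun i => if h : i < l.length then k (l.get ⟨i, h⟩) else 0 with hF
  have step : ∀ i : Fin r, k (padTo x₀ (mFun s) r i) = F (i : ℕ) := by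
    intro i
    simp only [padTo, mFun, hF]
    split <;> simp [hk₀, hl]
  calc ∑ i : Fin r, k (padTo x₀ (mFun s) r i)
      = ∑ i : Fin r, F (i : ℕ) := Finset.sum_congr rfl (fun i _ => step i)
    _ = ∑ i ∈ Finset.range r, F i := (Finset.sum_range fun i => F i).symm
    _ = ∑ i ∈ Finset.range l.length, F i := by
        refine (Finset.sum_subset ?_ ?_).symm
        · exact Finset.range_subset_range.2 (hlen ▸ hr)
        · intro i _ hi
          simp only [Finset.mem_range, not_lt] at hi
          simp [hF, Nat.not_lt.2 hi]
    _ = ∑ i : Fin l.length, F (i : ℕ) := Finset.sum_range fun i => F i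
    _ = ∑ i : Fin l.length, k (l.get i) := by
        refine Finset.sum_congr rfl fun i _ => ?_
        simp [hF, i.isLt]
    _ = (l.map k).sum := sum_fin_map k l
    _ = (s.map k).sum := by
        conv_rhs => rw [← Multiset.coe_toList s]
        rw [Multiset.map_coe, Multiset.sum_coe, hl]

/-- Kantorovich–Rubinstein inequality for persistence diagrams: for every 1-Lipschitz
`k : X → ℝ` vanishing at the basepoint, `Σᵢ k(aᵢ) − Σⱼ k(bⱼ) ≤ W₁(α, β)`. -/
theorem kantorovich_rubinstein_inequality (d : X → X → ℝ≥0∞) (hd : IsEPMetric d) (x₀ : X)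
    (k : X → ℝ) (hk₀ : k x₀ = 0)
    (hkLip : ∀ x y : X, ENNReal.ofReal |k x - k y| ≤ d x y)
    (s t : Multiset X) :
    ENNReal.ofReal ((s.map k).sum - (t.map k).sum)
      ≤ Wp d x₀ 1 ((diagCon x₀).mk' s) ((diagCon x₀).mk' t) := by
  rw [Wp]
  refine le_iInf fun s' => le_iInf fun t' => le_iInf fun hs => le_iInf fun ht => ?_
  rw [← sum_map_eq_of_rel x₀ k hk₀ hs, ← sum_map_eq_of_rel x₀ k hk₀ ht]
  rw [WpM, matchCost]
  set r := Multiset.card s' + Multiset.card t' with hr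
  set x := padTo x₀ (mFun s') r with hx
  set y := padTo x₀ (mFun t') r with hy
  refine le_iInf fun σ => ?_
  have hlp : lpNorm 1 (fun j => d (x j) (y (σ j))) = ∑ j, d (x j) (y (σ j)) := by
    simp [lpNorm, ENNReal.rpow_one]
  rw [hlp]
  have hxs : ∑ i : Fin r, k (x i) = (s'.map k).sum :=
    sum_padTo x₀ k hk₀ s' r (Nat.le_add_right _ _)
  have hyt : ∑ i : Fin r, k (y i) = (t'.map k).sum :=
    sum_padTo x₀ k hk₀ t' r (Nat.le_add_left _ _)
  have hyσ : ∑ i : Fin r, k (y (σ i)) = (t'.map k).sum := by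
    rw [← hyt]; exact Equiv.sum_comp σ (fun i => k (y i))
  have hdiff : (s'.map k).sum - (t'.map k).sum = ∑ i : Fin r, (k (x i) - k (y (σ i))) := by
    rw [Finset.sum_sub_distrib, hxs, hyσ]
  rw [hdiff]
  refine (ofReal_sum_le' _).trans (Finset.sum_le_sum fun i _ => ?_)
  exact (ENNReal.ofReal_le_ofReal (le_abs_self _)).trans (hkLip _ _)


end
end

section
/- Kantorovich-Rubinstein duality for persistence diagrams: let (X, d, x₀) be a pointed metric space and α = a₁+⋯+a_n, β = b₁+⋯+b_m ∈ D(X, x₀). Then W₁[d, x₀](α, β) equals the maximum over all 1-Lipschitz functions h : X → ℝ of Σᵢ h(aᵢ) − Σⱼ h(bⱼ) + (m − n)h(x₀), and this maximum is attained. -/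
open scoped ENNReal BigOperators
noncomputable section

variable {X : Type*}

/-! ### Auxiliary lemmas for the proof -/

namespace KRAux

variable {ι : Type*}

/-- Weight of a path (list of vertices) with respect to an edge-weight function. -/
def pw (W : ι → ι → ℝ) : List ι → ℝ
  | a :: b :: t => W a b + pw W (b :: t)
  | _ => 0

@[simp] lemma pw_nil (W : ι → ι → ℝ) : pw W [] = 0 := rfl
@[simp] lemma pw_single (W : ι → ι → ℝ) (a : ι) : pw W [a] = 0 := rfl
@[simp] lemma pw_cons_cons (W : ι → ι → ℝ) (a b : ι) (t : List ι) :
    pw W (a :: b :: t) = W a b + pw W (b :: t) := rfl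

lemma pw_ofFn (W : ι → ι → ℝ) : ∀ (m : ℕ) (v : Fin (m + 1) → ι),
    pw W (List.ofFn v) = ∑ i : Fin m, W (v i.castSucc) (v i.succ)
  | 0, v => by simp
  | m + 1, v => by
    have h2 : List.ofFn v = v 0 :: v 1 :: List.ofFn (fun i : Fin m => v i.succ.succ) := by
      rw [List.ofFn_succ, List.ofFn_succ]
      simp [Fin.succ_zero_eq_one]
    rw [h2, pw_cons_cons]
    have h3 : (v 1 :: List.ofFn fun i : Fin m => v i.succ.succ)
        = List.ofFn (fun i : Fin (m + 1) => v i.succ) := by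
      rw [List.ofFn_succ]
      simp
    rw [h3, pw_ofFn W m (fun i : Fin (m+1) => v i.succ), Fin.sum_univ_succ]
    simp only [Fin.succ_castSucc, Fin.castSucc_zero, Fin.succ_zero_eq_one]

lemma pw_append_singleton (W : ι → ι → ℝ) : ∀ (l : List ι) (h : l ≠ []) (j : ι),
    pw W (l ++ [j]) = pw W l + W (l.getLast h) j
  | [], h, j => absurd rfl h
  | [a], _, j => by simp
  | a :: b :: t, _, j => by
    rw [List.cons_append, List.cons_append, pw_cons_cons]
    rw [← List.cons_append, pw_append_singleton W (b :: t) (by simp) j]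
    simp [pw_cons_cons]
    ring

lemma pw_split (W : ι → ι → ℝ) : ∀ (s : List ι) (a : ι) (t : List ι),
    pw W (s ++ a :: t) = pw W (s ++ [a]) + pw W (a :: t)
  | [], a, t => by simp
  | [b], a, t => by simp [pw_cons_cons]
  | b :: c :: s', a, t => by
    have := pw_split W (c :: s') a t
    simp only [List.cons_append, pw_cons_cons] at *
    rw [this]; ring

/-- Nonnegativity of cycles, vector form. -/
lemma cycle_nonneg [Fintype ι] [DecidableEq ι] (W : ι → ι → ℝ)
    (hdiag : ∀ i, W i i = 0) (hcyc : ∀ τ : Equiv.Perm ι, 0 ≤ ∑ i, W i (τ i))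
    (m : ℕ) (u : Fin (m + 1) → ι) (hu : Function.Injective u) :
    0 ≤ (∑ i : Fin m, W (u i.castSucc) (u i.succ)) + W (u (Fin.last m)) (u 0) := by
  classical
  set e : Fin (m + 1) ≃ Set.range u := Equiv.ofInjective u hu with he
  set τ : Equiv.Perm ι := (finRotate (m + 1)).extendDomain e with hτ
  have key : ∀ i : Fin (m + 1), τ (u i) = u (finRotate (m + 1) i) := by
    intro i
    have : u i = (e i : ι) := rfl
    rw [this, hτ, Equiv.Perm.extendDomain_apply_image]
    rfl
  have h0 := hcyc τ
  have hsub : (Finset.univ.image u) ⊆ Finset.univ := Finset.subset_univ _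
  have h1 : ∑ i, W i (τ i) = ∑ i ∈ Finset.univ.image u, W i (τ i) := by
    refine (Finset.sum_subset hsub ?_).symm
    intro x _ hx
    have hxr : x ∉ Set.range u := by
      intro ⟨i, hi⟩; exact hx (Finset.mem_image.2 ⟨i, Finset.mem_univ _, hi⟩)
    rw [hτ, Equiv.Perm.extendDomain_apply_not_subtype _ _ hxr, hdiag]
  have h2 : ∑ i ∈ Finset.univ.image u, W i (τ i)
      = ∑ i : Fin (m + 1), W (u i) (τ (u i)) := by
    rw [Finset.sum_image (fun a _ b _ h => hu h)]
  have h3 : ∑ i : Fin (m + 1), W (u i) (τ (u i))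
      = (∑ i : Fin m, W (u i.castSucc) (u i.succ)) + W (u (Fin.last m)) (u 0) := by
    simp_rw [key]
    rw [Fin.sum_univ_castSucc]
    congr 1
    · apply Finset.sum_congr rfl
      intro i _
      rw [finRotate_succ_apply, Fin.coeSucc_eq_succ]
    · rw [finRotate_last]
  rw [h1, h2, h3] at h0
  exact h0

/-- Nonnegativity of cycles, list form. -/
lemma cycle_nonneg_list [Fintype ι] [DecidableEq ι] (W : ι → ι → ℝ)
    (hdiag : ∀ i, W i i = 0) (hcyc : ∀ τ : Equiv.Perm ι, 0 ≤ ∑ i, W i (τ i))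
    (a : ι) (t : List ι) (hnd : (a :: t).Nodup) :
    0 ≤ pw W (a :: t) + W ((a :: t).getLast (List.cons_ne_nil a t)) a := by
  set l := a :: t with hl
  have hlen : l.length = t.length + 1 := by simp [hl]
  set u : Fin (t.length + 1) → ι := fun i => l.get (Fin.cast hlen.symm i) with hu
  have hui : Function.Injective u := by
    intro i j hij
    have := List.nodup_iff_injective_get.1 hnd hij
    simpa [Fin.ext_iff] using this
  have hofn : List.ofFn u = l := by
    apply List.ext_get (by simp [hlen])
    intro n h₁ h₂
    simp only [List.get_ofFn, hu]
    rfl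
  have h1 : pw W l = ∑ i : Fin t.length, W (u i.castSucc) (u i.succ) := by
    rw [← pw_ofFn W t.length u, hofn]
  have h2 : l.getLast (List.cons_ne_nil a t) = u (Fin.last t.length) := by
    rw [List.getLast_eq_getElem]
    simp [hu, hlen]
  have h3 : u 0 = a := by simp [hu, hl]
  rw [h1, h2, ← h3]
  exact cycle_nonneg W hdiag hcyc t.length u hui

/-- Existence of potentials for a weight function with no negative cycles. -/
lemma exists_potential [Fintype ι] [DecidableEq ι] [Nonempty ι] (W : ι → ι → ℝ)
    (hdiag : ∀ i, W i i = 0) (hcyc : ∀ τ : Equiv.Perm ι, 0 ≤ ∑ i, W i (τ i)) :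
    ∃ p : ι → ℝ, ∀ i j, p j ≤ p i + W i j := by
  classical
  set S : ι → Set ℝ := fun j =>
    {q | ∃ (l : List ι) (h : l ≠ []), l.Nodup ∧ l.getLast h = j ∧ q = pw W l} with hS
  have hfin : ∀ j, (S j).Finite := by
    intro j
    have : S j ⊆ Set.range (fun x : Σ m : Fin (Fintype.card ι + 1), (Fin m.1 → ι) =>
        pw W (List.ofFn x.2)) := by
      rintro q ⟨l, h, hnd, hlast, rfl⟩
      have hle : l.length < Fintype.card ι + 1 := Nat.lt_succ_of_le hnd.length_le_card
      exact ⟨⟨⟨l.length, hle⟩, l.get⟩, by simp [List.ofFn_get]⟩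
    exact Set.Finite.subset (Set.finite_range _) this
  have hne : ∀ j, (S j).Nonempty := fun j => ⟨0, [j], by simp, by simp, by simp, rfl⟩
  set p : ι → ℝ := fun j => sInf (S j) with hp
  have hmem : ∀ j, p j ∈ S j := fun j => (hne j).csInf_mem (hfin j)
  have hle : ∀ j q, q ∈ S j → p j ≤ q := fun j q hq =>
    csInf_le (hfin j).bddBelow hq
  refine ⟨p, fun i j => ?_⟩
  obtain ⟨l, h, hnd, hlast, hval⟩ := hmem i
  by_cases hj : j ∈ l
  · obtain ⟨s', t', rfl⟩ := List.append_of_mem hj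
    have hts : (j :: t') ≠ [] := List.cons_ne_nil _ _
    have hi : (j :: t').getLast hts = i := by
      rw [← hlast, List.getLast_append_right (l := s') hts]
    have hndt : (j :: t').Nodup := hnd.of_append_right
    have hcyc' : 0 ≤ pw W (j :: t') + W i j := by
      have h4 := cycle_nonneg_list W hdiag hcyc j t' hndt
      rwa [hi] at h4
    have hsub : (s' ++ [j]).Sublist (s' ++ j :: t') :=
      List.Sublist.append_left ((List.nil_sublist t').cons₂ j) s'
    have hmem' : pw W (s' ++ [j]) ∈ S j := by
      refine ⟨s' ++ [j], by simp, hsub.nodup hnd, ?_, rfl⟩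
      exact List.getLast_append_singleton s'
    have hsplit : pw W (s' ++ j :: t') = pw W (s' ++ [j]) + pw W (j :: t') :=
      pw_split W s' j t'
    have h5 := hle j _ hmem'
    linarith
  · have h' : (l ++ [j]) ≠ [] := by simp
    have hnd' : (l ++ [j]).Nodup := by
      rw [List.nodup_append]
      exact ⟨hnd, List.nodup_singleton j, by simpa using fun a (ha : a ∈ l) (hab : a = j) => hj (hab ▸ ha)⟩
    have hlast' : (l ++ [j]).getLast h' = j := List.getLast_append_singleton l
    have heq : pw W (l ++ [j]) = pw W l + W i j := by
      rw [pw_append_singleton W l h j, hlast]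
    have h5 := hle j _ ⟨l ++ [j], h', hnd', hlast', rfl⟩
    linarith

variable {X : Type*} [MetricSpace X]

lemma sum_sub_le {r : ℕ} (x y : Fin r → X) (h : X → ℝ) (hh : LipschitzWith 1 h)
    (σ : Equiv.Perm (Fin r)) :
    (∑ k, h (x k)) - (∑ k, h (y (σ k))) ≤ ∑ k, dist (x k) (y (σ k)) := by
  rw [← Finset.sum_sub_distrib]
  apply Finset.sum_le_sum
  intro k _
  calc h (x k) - h (y (σ k)) ≤ |h (x k) - h (y (σ k))| := le_abs_self _
    _ = dist (h (x k)) (h (y (σ k))) := (Real.dist_eq _ _).symm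
    _ ≤ 1 * dist (x k) (y (σ k)) := hh.dist_le_mul _ _
    _ = dist (x k) (y (σ k)) := one_mul _

/-- Construction of the optimal Lipschitz function for two equal-length tuples. -/
lemma core {r : ℕ} (x y : Fin r → X) :
    ∃ (h : X → ℝ) (σ₀ : Equiv.Perm (Fin r)),
      LipschitzWith 1 h ∧
      (∀ σ : Equiv.Perm (Fin r), ∑ k, dist (x k) (y (σ₀ k)) ≤ ∑ k, dist (x k) (y (σ k))) ∧
      (∑ k, h (x k)) - (∑ k, h (y k)) = ∑ k, dist (x k) (y (σ₀ k)) := by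
  classical
  rcases Nat.eq_zero_or_pos r with hr | hr
  · subst hr
    refine ⟨fun _ => 0, 1, ?_, by simp, by simp⟩
    intro a b
    simp
  · have : Nonempty (Fin r) := Fin.pos_iff_nonempty.1 hr
    set c : Fin r → Fin r → ℝ := fun k j => dist (x k) (y j) with hc
    obtain ⟨σ₀, hσ₀⟩ := Finite.exists_min (fun σ : Equiv.Perm (Fin r) => ∑ k, c k (σ k))
    set W : Fin r → Fin r → ℝ := fun i j => c (σ₀⁻¹ j) i - c (σ₀⁻¹ j) j with hW
    have hdiag : ∀ i, W i i = 0 := fun i => sub_self _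
    have hcyc : ∀ τ : Equiv.Perm (Fin r), 0 ≤ ∑ i, W i (τ i) := by
      intro τ
      have hA : ∑ i, c (σ₀⁻¹ (τ i)) i = ∑ k, c k (τ.symm (σ₀ k)) := by
        apply Fintype.sum_equiv (τ.trans σ₀.symm)
        intro i
        simp [Equiv.Perm.inv_def]
      have hB : ∑ i, c (σ₀⁻¹ (τ i)) (τ i) = ∑ k, c k (σ₀ k) := by
        apply Fintype.sum_equiv (τ.trans σ₀.symm)
        intro i
        simp [Equiv.Perm.inv_def]
      have hmin := hσ₀ (σ₀.trans τ.symm)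
      simp only [Equiv.trans_apply] at hmin
      have : ∑ i, W i (τ i) = (∑ i, c (σ₀⁻¹ (τ i)) i) - ∑ i, c (σ₀⁻¹ (τ i)) (τ i) := by
        rw [← Finset.sum_sub_distrib]
      rw [this, hA, hB]
      linarith
    obtain ⟨p, hp⟩ := exists_potential W hdiag hcyc
    have hpot : ∀ k j, c k (σ₀ k) + p (σ₀ k) ≤ c k j + p j := by
      intro k j
      have h1 := hp j (σ₀ k)
      simp only [hW, Equiv.Perm.inv_def, Equiv.symm_apply_apply] at h1
      linarith
    set h : X → ℝ := fun z => Finset.univ.inf' Finset.univ_nonempty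
      (fun j => dist z (y j) + p j) with hh
    have hle2 : ∀ z w, h z ≤ dist z w + h w := by
      intro z w
      obtain ⟨j, _, hj⟩ := Finset.exists_mem_eq_inf' Finset.univ_nonempty
        (fun j => dist w (y j) + p j)
      have h1 : h z ≤ dist z (y j) + p j := Finset.inf'_le _ (Finset.mem_univ j)
      have h2 : dist z (y j) ≤ dist z w + dist w (y j) := dist_triangle _ _ _
      have hjw : h w = dist w (y j) + p j := hj
      calc h z ≤ dist z (y j) + p j := h1
        _ ≤ dist z w + (dist w (y j) + p j) := by linarith
        _ = dist z w + h w := by rw [hjw]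
    have hlip : LipschitzWith 1 h := by
      apply LipschitzWith.of_dist_le_mul
      intro z w
      rw [NNReal.coe_one, one_mul, Real.dist_eq, abs_sub_le_iff]
      constructor
      · have := hle2 z w; linarith
      · have := hle2 w z; rw [dist_comm] at this; linarith
    have hyj : ∀ j, h (y j) ≤ p j := by
      intro j
      have h0 : h (y j) ≤ dist (y j) (y j) + p j :=
        Finset.inf'_le _ (Finset.mem_univ j)
      simpa using h0
    have hxk : ∀ k, h (x k) = c k (σ₀ k) + p (σ₀ k) := by
      intro k
      refine le_antisymm (Finset.inf'_le _ (Finset.mem_univ _)) ?_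
      apply Finset.le_inf'
      intro j _
      exact hpot k j
    refine ⟨h, σ₀, hlip, hσ₀, ?_⟩
    have hsx : ∑ k, h (x k) = (∑ k, c k (σ₀ k)) + ∑ j, p j := by
      rw [← Equiv.sum_comp σ₀ p, ← Finset.sum_add_distrib]
      exact Finset.sum_congr rfl fun k _ => hxk k
    have hsy : ∑ j, h (y j) ≤ ∑ j, p j := Finset.sum_le_sum fun j _ => hyj j
    have hub := sum_sub_le x y h hlip σ₀
    rw [Equiv.sum_comp σ₀ (fun j => h (y j))] at hub
    have : (∑ k, h (x k)) - (∑ k, h (y k)) ≥ ∑ k, c k (σ₀ k) := by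
      rw [hsx]; linarith
    exact le_antisymm hub (by simpa [hc] using this)

lemma lpNorm_one {n : ℕ} (v : Fin n → ℝ≥0∞) : lpNorm 1 v = ∑ i, v i := by
  rw [lpNorm, if_neg ENNReal.one_ne_top]
  simp

lemma sum_edist_eq {r : ℕ} (x y : Fin r → X) :
    (∑ k, edist (x k) (y k)) = ENNReal.ofReal (∑ k, dist (x k) (y k)) := by
  rw [ENNReal.ofReal_sum_of_nonneg (fun k _ => dist_nonneg)]
  exact Finset.sum_congr rfl fun k _ => (edist_dist _ _)

lemma list_sum_map {α : Type*} (f : α → ℝ) (l : List α) :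
    (l.map f).sum = ∑ i : Fin l.length, f (l.get i) := by
  conv_lhs => rw [← List.ofFn_get l]
  rw [List.map_ofFn, List.sum_ofFn]
  rfl

lemma multiset_sum_map (f : X → ℝ) (s : Multiset X) :
    ((s.map f).sum : ℝ) = ∑ i : Fin s.toList.length, f (mFun s i) := by
  conv_lhs => rw [← Multiset.coe_toList s]
  rw [Multiset.map_coe, Multiset.sum_coe]
  exact list_sum_map f s.toList

lemma sum_pad (x₀ : X) (h : X → ℝ) {q : ℕ} (u : Fin q → X) (r : ℕ) (hq : q ≤ r) :
    ∑ k : Fin r, h (padTo x₀ u r k)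
      = (∑ i : Fin q, h (u i)) + (r - q : ℕ) * h x₀ := by
  set g : ℕ → ℝ := fun k => if hk : k < q then h (u ⟨k, hk⟩) else h x₀ with hg
  have h1 : ∀ k : Fin r, h (padTo x₀ u r k) = g k.val := by
    intro k
    simp only [padTo, hg]
    split <;> rfl
  calc ∑ k : Fin r, h (padTo x₀ u r k) = ∑ k : Fin r, g k.val :=
        Finset.sum_congr rfl fun k _ => h1 k
    _ = ∑ k ∈ Finset.range r, g k := Fin.sum_univ_eq_sum_range g r
    _ = ∑ k ∈ Finset.range (q + (r - q)), g k := by rw [Nat.add_sub_cancel' hq]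
    _ = (∑ k ∈ Finset.range q, g k) + ∑ k ∈ Finset.range (r - q), g (q + k) :=
        Finset.sum_range_add g q (r - q)
    _ = (∑ i : Fin q, h (u i)) + (r - q : ℕ) * h x₀ := by
      congr 1
      · rw [← Fin.sum_univ_eq_sum_range g q]
        apply Finset.sum_congr rfl
        intro i _
        rw [hg]
        simp only [Fin.is_lt, dif_pos, Fin.eta]
      · rw [Finset.sum_congr rfl (fun k hk => ?_), Finset.sum_const, Finset.card_range,
          nsmul_eq_mul]
        rw [hg]
        simp only
        rw [dif_neg (by omega)]

/-- The defining expression equals a difference of padded sums. -/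
lemma expr_pad (x₀ : X) (h : X → ℝ) (s t : Multiset X) :
    (s.map h).sum - (t.map h).sum
        + ((Multiset.card t : ℝ) - (Multiset.card s : ℝ)) * h x₀
      = (∑ k : Fin (Multiset.card s + Multiset.card t),
          h (padTo x₀ (mFun s) (Multiset.card s + Multiset.card t) k))
        - ∑ k : Fin (Multiset.card s + Multiset.card t),
            h (padTo x₀ (mFun t) (Multiset.card s + Multiset.card t) k) := by
  have hs : s.toList.length = Multiset.card s := Multiset.length_toList s
  have ht : t.toList.length = Multiset.card t := Multiset.length_toList t
  have h1 := sum_pad x₀ h (mFun s) (Multiset.card s + Multiset.card t) (by omega)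
  have h2 := sum_pad x₀ h (mFun t) (Multiset.card s + Multiset.card t) (by omega)
  rw [h1, h2, ← multiset_sum_map h s, ← multiset_sum_map h t]
  have e1 : (Multiset.card s + Multiset.card t - s.toList.length : ℕ) = Multiset.card t := by
    omega
  have e2 : (Multiset.card s + Multiset.card t - t.toList.length : ℕ) = Multiset.card s := by
    omega
  rw [e1, e2]
  ring

/-- The lower-bound half of Kantorovich–Rubinstein duality. -/
lemma expr_le_WpM (x₀ : X) (h : X → ℝ) (hl : LipschitzWith 1 h) (s t : Multiset X) :
    ENNReal.ofReal ((s.map h).sum - (t.map h).sum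
        + ((Multiset.card t : ℝ) - (Multiset.card s : ℝ)) * h x₀)
      ≤ WpM edist x₀ 1 s t := by
  rw [WpM, matchCost]
  set r := Multiset.card s + Multiset.card t with hr
  set xv := padTo x₀ (mFun s) r with hxv
  set yv := padTo x₀ (mFun t) r with hyv
  refine le_iInf fun σ => ?_
  have e1 : lpNorm 1 (fun k => edist (xv k) (yv (σ k)))
      = ENNReal.ofReal (∑ k, dist (xv k) (yv (σ k))) := by
    rw [lpNorm_one]
    exact sum_edist_eq xv (fun k => yv (σ k))
  rw [e1, expr_pad x₀ h s t]
  apply ENNReal.ofReal_le_ofReal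
  have h3 := sum_sub_le xv yv h hl σ
  have h4 := Equiv.sum_comp σ (fun k => h (yv k))
  calc (∑ k, h (xv k)) - ∑ k, h (yv k)
      = (∑ k, h (xv k)) - ∑ k, h (yv (σ k)) := by rw [h4]
    _ ≤ ∑ k, dist (xv k) (yv (σ k)) := h3

/-- Invariance of the expression under the diagram congruence. -/
lemma expr_congr (x₀ : X) (h : X → ℝ) {s s' t t' : Multiset X}
    (hs : ∃ a b : ℕ, s + Multiset.replicate a x₀ = s' + Multiset.replicate b x₀)
    (ht : ∃ a b : ℕ, t + Multiset.replicate a x₀ = t' + Multiset.replicate b x₀) :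
    (s.map h).sum - (t.map h).sum
        + ((Multiset.card t : ℝ) - (Multiset.card s : ℝ)) * h x₀
      = (s'.map h).sum - (t'.map h).sum
        + ((Multiset.card t' : ℝ) - (Multiset.card s' : ℝ)) * h x₀ := by
  obtain ⟨a, b, hab⟩ := hs
  obtain ⟨a', b', hab'⟩ := ht
  have e1 : ((s.map h).sum : ℝ) + a * h x₀ = (s'.map h).sum + b * h x₀ := by
    have := congrArg (fun u => ((u.map h).sum : ℝ)) hab
    simpa [Multiset.sum_replicate, nsmul_eq_mul] using this
  have e2 : ((t.map h).sum : ℝ) + a' * h x₀ = (t'.map h).sum + b' * h x₀ := by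
    have := congrArg (fun u => ((u.map h).sum : ℝ)) hab'
    simpa [Multiset.sum_replicate, nsmul_eq_mul] using this
  have c1 : (Multiset.card s : ℝ) + a = Multiset.card s' + b := by
    have := congrArg (fun u => ((Multiset.card u : ℕ) : ℝ)) hab
    simpa using this
  have c2 : (Multiset.card t : ℝ) + a' = Multiset.card t' + b' := by
    have := congrArg (fun u => ((Multiset.card u : ℕ) : ℝ)) hab'
    simpa using this
  linear_combination e1 - e2 + h x₀ * (c2 - c1)

end KRAux

/-- Kantorovich–Rubinstein duality for persistence diagrams on a pointed metric space:
`W₁(α, β)` is the maximum, over 1-Lipschitz `h : X → ℝ`, of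
`Σᵢ h(aᵢ) − Σⱼ h(bⱼ) + (m − n)·h(x₀)`, and the maximum is attained. -/
theorem kantorovich_rubinstein_duality {X : Type*} [MetricSpace X] (x₀ : X)
    (s t : Multiset X) :
    ∃ h : X → ℝ, LipschitzWith 1 h ∧
      ENNReal.ofReal ((s.map h).sum - (t.map h).sum
          + ((Multiset.card t : ℝ) - (Multiset.card s : ℝ)) * h x₀)
        = Wp edist x₀ 1 ((diagCon x₀).mk' s) ((diagCon x₀).mk' t) ∧
      ∀ h' : X → ℝ, LipschitzWith 1 h' →
        ENNReal.ofReal ((s.map h').sum - (t.map h').sum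
            + ((Multiset.card t : ℝ) - (Multiset.card s : ℝ)) * h' x₀)
          ≤ Wp edist x₀ 1 ((diagCon x₀).mk' s) ((diagCon x₀).mk' t) := by
  classical
  set n := Multiset.card s with hn
  set m := Multiset.card t with hm
  set r := n + m with hr
  set xv := padTo x₀ (mFun s) r with hxv
  set yv := padTo x₀ (mFun t) r with hyv
  obtain ⟨h, σ₀, hlip, hopt, heqc⟩ := KRAux.core xv yv
  -- the general upper bound
  have hb : ∀ h' : X → ℝ, LipschitzWith 1 h' →
      ENNReal.ofReal ((s.map h').sum - (t.map h').sum
          + ((Multiset.card t : ℝ) - (Multiset.card s : ℝ)) * h' x₀)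
        ≤ Wp edist x₀ 1 ((diagCon x₀).mk' s) ((diagCon x₀).mk' t) := by
    intro h' hl'
    rw [Wp]
    refine le_iInf fun s' => le_iInf fun t' => le_iInf fun hs' => le_iInf fun ht' => ?_
    have rs : (diagCon x₀) s' s := (AddCon.eq _).1 hs'
    have rt : (diagCon x₀) t' t := (AddCon.eq _).1 ht'
    have rs' : (diagCon x₀) s s' := (diagCon x₀).symm rs
    have rt' : (diagCon x₀) t t' := (diagCon x₀).symm rt
    rw [KRAux.expr_congr x₀ h' rs' rt']
    exact KRAux.expr_le_WpM x₀ h' hl' s' t'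
  -- Wp is at most the canonical matching cost
  have hWle : Wp edist x₀ 1 ((diagCon x₀).mk' s) ((diagCon x₀).mk' t)
      ≤ WpM edist x₀ 1 s t := by
    rw [Wp]
    exact iInf_le_of_le s (iInf_le_of_le t (iInf_le_of_le rfl (iInf_le _ rfl)))
  -- the canonical matching cost is attained by σ₀
  have hWpM : WpM edist x₀ 1 s t
      = ENNReal.ofReal (∑ k, dist (xv k) (yv (σ₀ k))) := by
    rw [WpM, matchCost]
    have e1 : ∀ σ : Equiv.Perm (Fin r), lpNorm 1 (fun k => edist (xv k) (yv (σ k)))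
        = ENNReal.ofReal (∑ k, dist (xv k) (yv (σ k))) := by
      intro σ
      rw [KRAux.lpNorm_one]
      exact KRAux.sum_edist_eq xv (fun k => yv (σ k))
    apply le_antisymm
    · exact iInf_le_of_le σ₀ (le_of_eq (e1 σ₀))
    · refine le_iInf fun σ => ?_
      rw [e1 σ]
      exact ENNReal.ofReal_le_ofReal (hopt σ)
  refine ⟨h, hlip, ?_, hb⟩
  apply le_antisymm (hb h hlip)
  calc Wp edist x₀ 1 ((diagCon x₀).mk' s) ((diagCon x₀).mk' t)
      ≤ WpM edist x₀ 1 s t := hWle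
    _ = ENNReal.ofReal (∑ k, dist (xv k) (yv (σ₀ k))) := hWpM
    _ = ENNReal.ofReal ((∑ k, h (xv k)) - ∑ k, h (yv k)) := by rw [heqc]
    _ = ENNReal.ofReal ((s.map h).sum - (t.map h).sum
          + ((Multiset.card t : ℝ) - (Multiset.card s : ℝ)) * h x₀) := by
        rw [KRAux.expr_pad x₀ h s t]


end
end
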